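/- arXiv:1607.06517 — 2 statements merged into one kernel-verified Lean document; each statement's English description precedes it below -/
import Mathlib

section
/- For all x ≥ 0 and T > 0, (1 - 1/e) · min(T, x) ≤ T(1 - exp(-x/T)) ≤ min(T, x). -/
open Real

lemma exp_neg_le_line {t : ℝ} (h0 : 0 ≤ t) (h1 : t ≤ 1) :
    Real.exp (-t) ≤ (1 - t) + t * Real.exp (-1) := by
  have hc := convexOn_exp.2 (Set.mem_univ (0 : ℝ)) (Set.mem_univ (-1 : ℝ))
    (by linarith : (0:ℝ) ≤ 1 - t) h0 (by ring)
  simpa [smul_eq_mul] using hc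

theorem softcap_sandwich (T x : ℝ) (hT : 0 < T) (hx : 0 ≤ x) :
    (1 - 1 / Real.exp 1) * min T x ≤ T * (1 - Real.exp (-x / T)) ∧
    T * (1 - Real.exp (-x / T)) ≤ min T x := by
  have hT' := hT.ne'
  have hE : Real.exp (-1) = 1 / Real.exp 1 := by
    rw [Real.exp_neg]; ring
  constructor
  · rcases le_total x T with hxT | hTx
    · have hmin : min T x = x := min_eq_right hxT
      have ht0 : 0 ≤ x / T := div_nonneg hx hT.le
      have ht1 : x / T ≤ 1 := (div_le_one hT).mpr hxT
      have key := exp_neg_le_line ht0 ht1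
      rw [hmin]
      have : Real.exp (-x / T) ≤ (1 - x / T) + (x / T) * Real.exp (-1) := by
        rwa [neg_div] at *
      rw [← hE]
      have h2 : T * (1 - Real.exp (-x / T)) ≥ T * (x / T - (x / T) * Real.exp (-1)) := by
        apply mul_le_mul_of_nonneg_left _ hT.le
        linarith
      calc (1 - Real.exp (-1)) * x = T * (x / T - (x / T) * Real.exp (-1)) := by
            field_simp
        _ ≤ T * (1 - Real.exp (-x / T)) := h2
    · have hmin : min T x = T := min_eq_left hTx
      have h1 : (-x / T : ℝ) ≤ -1 := by
        rw [neg_div, neg_le_neg_iff, le_div_iff₀ hT]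
        linarith
      have := Real.exp_le_exp.mpr h1
      rw [hmin, ← hE]
      nlinarith [Real.exp_pos (-x/T)]
  · have hUB1 : T * (1 - Real.exp (-x / T)) ≤ T := by
      nlinarith [Real.exp_pos (-x/T)]
    have hUB2 : T * (1 - Real.exp (-x / T)) ≤ x := by
      have h2 : -(x / T) + 1 ≤ Real.exp (-x / T) := by
        rw [neg_div]; exact Real.add_one_le_exp _
      have h : 1 - Real.exp (-x / T) ≤ x / T := by linarith
      calc T * (1 - Real.exp (-x / T)) ≤ T * (x / T) :=
            mul_le_mul_of_nonneg_left h hT.le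
        _ = x := by field_simp
    exact le_min hUB1 hUB2
end

section
/- Let w : ι → ℝ be a finite family of positive weights, L(t) = ∑_x (1 - exp(-w_x t)), S = ∑_x w_x and M = max_x w_x. Then for all t > 0, L(t) ≥ (1 - 1/e) · S · min(1/M, t). -/
open Real

lemma one_sub_exp_neg_ge (u : ℝ) (hu : 0 ≤ u) :
    (1 - 1 / Real.exp 1) * min 1 u ≤ 1 - Real.exp (-u) := by
  rcases le_total u 1 with h | h
  · rw [min_eq_right h]
    have hc := convexOn_exp.2 (Set.mem_univ (0 : ℝ)) (Set.mem_univ (-1 : ℝ))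
      (by linarith : (0:ℝ) ≤ 1 - u) hu (by ring)
    simp only [smul_eq_mul, mul_zero, zero_add, Real.exp_zero, mul_one] at hc
    rw [Real.exp_neg 1] at hc
    have h2 : Real.exp (-u) ≤ (1 - u) + u * (1 / Real.exp 1) := by
      rw [show -u = u * -1 by ring, one_div]
      exact hc
    nlinarith
  · rw [min_eq_left h]
    have h2 : Real.exp (-u) ≤ Real.exp (-1) := Real.exp_le_exp.2 (by linarith)
    rw [Real.exp_neg 1, ← one_div] at h2
    nlinarith

theorem complement_laplace_lower_bound
    {ι : Type*} [Fintype ι] (w : ι → ℝ) (hw : ∀ x, 0 < w x)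
    (M : ℝ) (hM : IsGreatest (Set.range w) M) :
    ∀ t : ℝ, 0 < t →
      (1 - 1 / Real.exp 1) * (∑ x, w x) * min (1 / M) t ≤
        ∑ x, (1 - Real.exp (-(w x) * t)) := by
  intro t ht
  obtain ⟨⟨x0, hx0⟩, hub⟩ := hM
  have hM0 : 0 < M := hx0 ▸ hw x0
  have hc : 0 ≤ 1 - 1 / Real.exp 1 := by
    have : 1 / Real.exp 1 ≤ 1 := by
      rw [div_le_one (Real.exp_pos 1)]
      linarith [Real.add_one_le_exp (1:ℝ)]
    linarith
  have key : ∀ x : ι, (1 - 1 / Real.exp 1) * (w x * min (1 / M) t) ≤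
      1 - Real.exp (-(w x) * t) := by
    intro x
    have hwx := hw x
    have hle : w x ≤ M := hub ⟨x, rfl⟩
    have h1 : w x * min (1 / M) t ≤ min 1 (w x * t) := by
      rw [mul_min_of_nonneg _ _ hwx.le]
      refine min_le_min ?_ le_rfl
      rw [mul_one_div, div_le_one hM0]; exact hle
    calc (1 - 1 / Real.exp 1) * (w x * min (1 / M) t)
        ≤ (1 - 1 / Real.exp 1) * min 1 (w x * t) := by
          exact mul_le_mul_of_nonneg_left h1 hc
      _ ≤ 1 - Real.exp (-(w x * t)) :=
          one_sub_exp_neg_ge _ (mul_nonneg hwx.le ht.le)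
      _ = 1 - Real.exp (-(w x) * t) := by ring_nf
  calc (1 - 1 / Real.exp 1) * (∑ x, w x) * min (1 / M) t
      = ∑ x, (1 - 1 / Real.exp 1) * (w x * min (1 / M) t) := by
        rw [Finset.mul_sum, Finset.sum_mul]
        exact Finset.sum_congr rfl fun x _ => by ring
    _ ≤ ∑ x, (1 - Real.exp (-(w x) * t)) :=
        Finset.sum_le_sum fun x _ => key x
end
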